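/- For every two integers a, b with 2 ≤ a ≤ b, there exists a connected graph G of order b with dim_wt(G) = a. -/

import Mathlib

open SimpleGraph

variable {V : Type*}

/-- `W` is a resolving set: every pair of distinct vertices is resolved by some `w ∈ W`. -/
def IsResolvingSet (G : SimpleGraph V) (W : Finset V) : Prop :=
  ∀ u v : V, u ≠ v → ∃ w ∈ W, G.dist u w ≠ G.dist v w

/-- `W` is a weak total resolving set. -/
def IsWTRSet (G : SimpleGraph V) (W : Finset V) : Prop :=
  IsResolvingSet G W ∧
    ∀ v ∈ W, ∀ u : V, u ∉ W → ∃ w ∈ W, w ≠ v ∧ G.dist u w ≠ G.dist v w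

/-- `u` and `v` are twin vertices. -/
def AreTwins (G : SimpleGraph V) (u v : V) : Prop :=
  u ≠ v ∧ G.neighborSet u \ {v} = G.neighborSet v \ {u}

/-- Metric dimension. -/
noncomputable def metricDim (G : SimpleGraph V) : ℕ :=
  sInf {k | ∃ W : Finset V, W.card = k ∧ IsResolvingSet G W}

/-- Weak total metric dimension. -/
noncomputable def wtDim (G : SimpleGraph V) : ℕ :=
  sInf {k | ∃ W : Finset V, W.card = k ∧ IsWTRSet G W}

/-- Weak total resolving number: least `r` such that every `r`-subset is a WTR-set. -/
noncomputable def resWt (G : SimpleGraph V) : ℕ :=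
  sInf {r | ∀ W : Finset V, W.card = r → IsWTRSet G W}


/-- The graph: clique on `{0,...,a-1}` plus a path `a-1, a, ..., b-1`. -/
def gG (a b : ℕ) : SimpleGraph (Fin b) where
  Adj i j := i ≠ j ∧ (((i:ℕ) < a ∧ (j:ℕ) < a) ∨ ((i:ℕ)+1 = (j:ℕ) ∧ a ≤ (j:ℕ)) ∨ ((j:ℕ)+1 = (i:ℕ) ∧ a ≤ (i:ℕ)))
  symm := by constructor; intro i j ⟨h1, h2⟩; exact ⟨h1.symm, by tauto⟩
  loopless := by constructor; intro i ⟨h1, _⟩; exact h1 rfl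

lemma gG_adj {a b : ℕ} {i j : Fin b} :
    (gG a b).Adj i j ↔ i ≠ j ∧ (((i:ℕ) < a ∧ (j:ℕ) < a) ∨ ((i:ℕ)+1 = (j:ℕ) ∧ a ≤ (j:ℕ)) ∨ ((j:ℕ)+1 = (i:ℕ) ∧ a ≤ (i:ℕ))) :=
  Iff.rfl

lemma gG_adj' {a b : ℕ} {i j : Fin b} (h : (i:ℕ) ≠ (j:ℕ))
    (h2 : (((i:ℕ) < a ∧ (j:ℕ) < a) ∨ ((i:ℕ)+1 = (j:ℕ) ∧ a ≤ (j:ℕ)) ∨ ((j:ℕ)+1 = (i:ℕ) ∧ a ≤ (i:ℕ)))) :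
    (gG a b).Adj i j := ⟨fun e => h (by rw [e]), h2⟩

lemma gG_connected (a b : ℕ) (ha : 2 ≤ a) (hab : a ≤ b) : (gG a b).Connected := by
  have hb : 0 < b := by omega
  have key : ∀ n : ℕ, ∀ h : n < b, (gG a b).Reachable ⟨n, h⟩ ⟨0, hb⟩ := by
    intro n
    induction n with
    | zero => intro h; rfl
    | succ m ih =>
      intro h
      have hm : m < b := by omega
      by_cases hc : m + 1 < a
      · exact Adj.reachable (gG_adj' (by simp) (by simp; omega))
      · exact (Adj.reachable (gG_adj' (i := ⟨m+1, h⟩) (j := ⟨m, hm⟩) (by simp)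
          (by simp; omega))).trans (ih hm)
  haveI : Nonempty (Fin b) := ⟨⟨0, hb⟩⟩
  refine ⟨fun u v => ?_⟩
  exact (key u.1 (by simp)).trans (key v.1 (by simp)).symm

/-- Potential lower bound: if `f` is 1-Lipschitz along edges and `f t = 0`, then `f u ≤ dist u t`. -/
lemma pot_le_dist {V : Type*} {G : SimpleGraph V} (f : V → ℕ) (t : V)
    (h0 : f t = 0) (hlip : ∀ x y : V, G.Adj x y → f x ≤ f y + 1)
    (u : V) (hr : G.Reachable u t) : f u ≤ G.dist u t := by
  have key : ∀ (u : V) (p : G.Walk u t), f u ≤ p.length := by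
    intro u p
    induction p with
    | nil => simp [h0]
    | cons h q ih =>
      simp only [SimpleGraph.Walk.length_cons]
      have h1 := hlip _ _ h
      have h2 := ih h0 hr
      omega
  obtain ⟨p, hp⟩ := hr.exists_walk_length_eq_dist
  rw [← hp]
  exact key u p

/-- Distance invariance under a graph automorphism. -/
lemma iso_dist_le {V : Type*} {G : SimpleGraph V} (e : G ≃g G) (u v : V) :
    G.dist (e u) (e v) ≤ G.dist u v := by
  by_cases hr : G.Reachable u v
  · obtain ⟨p, hp⟩ := hr.exists_walk_length_eq_dist
    calc G.dist (e u) (e v) ≤ (p.map e.toHom).length := SimpleGraph.dist_le _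
    _ = p.length := SimpleGraph.Walk.length_map _ _
    _ = G.dist u v := hp
  · have : ¬ G.Reachable (e u) (e v) := by
      intro ⟨q⟩
      exact hr ⟨(q.map e.symm.toHom).copy (by simp) (by simp)⟩
    rw [SimpleGraph.dist_eq_zero_of_not_reachable this,
      SimpleGraph.dist_eq_zero_of_not_reachable hr]

lemma iso_dist {V : Type*} {G : SimpleGraph V} (e : G ≃g G) (u v : V) :
    G.dist (e u) (e v) = G.dist u v := by
  refine le_antisymm (iso_dist_le e u v) ?_
  have := iso_dist_le e.symm (e u) (e v)
  simpa using this

section Dist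
variable {a b : ℕ}

lemma val_ne_of_ne {i j : Fin b} (h : i ≠ j) : (i:ℕ) ≠ (j:ℕ) := fun e => h (Fin.ext e)

/-- distance to the last vertex, from a path vertex -/
lemma dist_last_of_path (ha : 2 ≤ a) (hab : a ≤ b) (u : Fin b) (hu : a - 1 ≤ (u:ℕ)) :
    (gG a b).dist u ⟨b-1, by omega⟩ = b - 1 - (u:ℕ) := by
  have hconn := gG_connected a b ha hab
  refine le_antisymm ?_ ?_
  · -- upper bound by induction on b-1-u
    have key : ∀ n : ℕ, ∀ u : Fin b, a - 1 ≤ (u:ℕ) → (b:ℕ) - 1 - (u:ℕ) = n →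
        (gG a b).dist u ⟨b-1, by omega⟩ ≤ n := by
      intro n
      induction n with
      | zero =>
        intro u hu1 hu2
        have : u = ⟨b-1, by omega⟩ := Fin.ext (by simp; omega)
        rw [this, SimpleGraph.dist_self]
      | succ m ih =>
        intro u hu1 hu2
        have hlt : (u:ℕ) + 1 < b := by omega
        have hadj : (gG a b).Adj u ⟨(u:ℕ)+1, hlt⟩ :=
          gG_adj' (by simp) (by simp; omega)
        calc (gG a b).dist u ⟨b-1, by omega⟩
            ≤ (gG a b).dist u ⟨(u:ℕ)+1, hlt⟩ + (gG a b).dist ⟨(u:ℕ)+1, hlt⟩ ⟨b-1, by omega⟩ :=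
              hconn.dist_triangle
          _ ≤ 1 + m := by
              have h1 : (gG a b).dist u ⟨(u:ℕ)+1, hlt⟩ = 1 :=
                SimpleGraph.dist_eq_one_iff_adj.mpr hadj
              have h2 := ih ⟨(u:ℕ)+1, hlt⟩ (by simp; omega) (by simp; omega)
              omega
          _ = m + 1 := by omega
    exact key _ u hu rfl
  · -- lower bound via potential
    have := pot_le_dist (G := gG a b)
      (fun x => if a - 1 ≤ (x:ℕ) then b - 1 - (x:ℕ) else b - a + 1) ⟨b-1, by omega⟩
      (by simp; omega)
      (by
        intro x y hadj
        obtain ⟨hne, hc⟩ := gG_adj.mp hadj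
        have hne' := val_ne_of_ne hne
        have hx := x.2
        have hy := y.2
        rcases hc with ⟨h1, h2⟩ | ⟨h1, h2⟩ | ⟨h1, h2⟩ <;> split_ifs <;> omega)
      u (hconn.preconnected u _)
    rw [if_pos hu] at this
    exact this

/-- distance from a twin to the last vertex -/
lemma dist_last_of_twin (ha : 2 ≤ a) (hab : a ≤ b) (hba : a < b) (i : Fin b) (hi : (i:ℕ) < a - 1) :
    (gG a b).dist i ⟨b-1, by omega⟩ = b - a + 1 := by
  have hconn := gG_connected a b ha hab
  refine le_antisymm ?_ ?_
  · have hj : a - 1 < b := by omega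
    have hadj : (gG a b).Adj i ⟨a-1, hj⟩ := gG_adj' (by simp; omega) (by simp; omega)
    calc (gG a b).dist i ⟨b-1, by omega⟩
        ≤ (gG a b).dist i ⟨a-1, hj⟩ + (gG a b).dist ⟨a-1, hj⟩ ⟨b-1, by omega⟩ :=
          hconn.dist_triangle
      _ ≤ 1 + (b - a) := by
          have h1 : (gG a b).dist i ⟨a-1, hj⟩ = 1 := SimpleGraph.dist_eq_one_iff_adj.mpr hadj
          have h2 := dist_last_of_path ha hab ⟨a-1, hj⟩ (by simp)
          simp at h2
          omega
      _ = b - a + 1 := by omega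
  · have := pot_le_dist (G := gG a b)
      (fun x => if a - 1 ≤ (x:ℕ) then b - 1 - (x:ℕ) else b - a + 1) ⟨b-1, by omega⟩
      (by simp; omega)
      (by
        intro x y hadj
        obtain ⟨hne, hc⟩ := gG_adj.mp hadj
        have hne' := val_ne_of_ne hne
        have hx := x.2
        have hy := y.2
        rcases hc with ⟨h1, h2⟩ | ⟨h1, h2⟩ | ⟨h1, h2⟩ <;> split_ifs <;> omega)
      i (hconn.preconnected i _)
    rw [if_neg (by omega : ¬ (a - 1 ≤ (i:ℕ)))] at this
    exact this

/-- distance to the zero vertex -/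
lemma gG_dist_zero (ha : 2 ≤ a) (hab : a ≤ b) (u : Fin b) :
    (gG a b).dist u ⟨0, by omega⟩ =
      if (u:ℕ) = 0 then 0 else if (u:ℕ) < a then 1 else (u:ℕ) - a + 2 := by
  have hconn := gG_connected a b ha hab
  refine le_antisymm ?_ ?_
  · by_cases h0 : (u:ℕ) = 0
    · have : u = ⟨0, by omega⟩ := Fin.ext (by simpa using h0)
      rw [this, SimpleGraph.dist_self]
      simp
    · by_cases h1 : (u:ℕ) < a
      · have hadj : (gG a b).Adj u ⟨0, by omega⟩ := gG_adj' (by simpa using h0) (by simp; omega)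
        rw [SimpleGraph.dist_eq_one_iff_adj.mpr hadj]
        simp [h0, h1]
      · -- u ≥ a : induction on u - a
        have key : ∀ n : ℕ, ∀ u : Fin b, (u:ℕ) = a + n →
            (gG a b).dist u ⟨0, by omega⟩ ≤ n + 2 := by
          intro n
          induction n with
          | zero =>
            intro u hu
            have hj : a - 1 < b := by omega
            have hadj1 : (gG a b).Adj u ⟨a-1, hj⟩ := gG_adj' (by simp; omega) (by simp; omega)
            have hadj2 : (gG a b).Adj (⟨a-1, hj⟩ : Fin b) ⟨0, by omega⟩ :=
              gG_adj' (by simp; omega) (by simp; omega)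
            calc (gG a b).dist u ⟨0, by omega⟩
                ≤ (gG a b).dist u ⟨a-1, hj⟩ + (gG a b).dist ⟨a-1, hj⟩ ⟨0, by omega⟩ :=
                  hconn.dist_triangle
              _ ≤ 0 + 2 := by
                  rw [SimpleGraph.dist_eq_one_iff_adj.mpr hadj1,
                    SimpleGraph.dist_eq_one_iff_adj.mpr hadj2]
          | succ m ih =>
            intro u hu
            have hlt : a + m < b := by omega
            have hadj : (gG a b).Adj u ⟨a + m, hlt⟩ := gG_adj' (by simp; omega) (by simp; omega)
            calc (gG a b).dist u ⟨0, by omega⟩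
                ≤ (gG a b).dist u ⟨a+m, hlt⟩ + (gG a b).dist ⟨a+m, hlt⟩ ⟨0, by omega⟩ :=
                  hconn.dist_triangle
              _ ≤ 1 + (m + 2) := by
                  have h2 := ih ⟨a+m, hlt⟩ (by simp)
                  rw [SimpleGraph.dist_eq_one_iff_adj.mpr hadj]
                  omega
              _ = m + 1 + 2 := by omega
        have := key ((u:ℕ) - a) u (by omega)
        rw [if_neg h0, if_neg h1]
        omega
  · have := pot_le_dist (G := gG a b)
      (fun x => if (x:ℕ) = 0 then 0 else if (x:ℕ) < a then 1 else (x:ℕ) - a + 2) ⟨0, by omega⟩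
      (by simp)
      (by
        intro x y hadj
        obtain ⟨hne, hc⟩ := gG_adj.mp hadj
        have hne' := val_ne_of_ne hne
        have hx := x.2
        have hy := y.2
        rcases hc with ⟨h1, h2⟩ | ⟨h1, h2⟩ | ⟨h1, h2⟩ <;> split_ifs <;> omega)
      u (hconn.preconnected u _)
    exact this

end Dist

/-- Twins have equal distances to all other vertices. -/
lemma twin_dist_eq {a b : ℕ} {i j : Fin b} (hi : (i:ℕ) < a - 1) (hj : (j:ℕ) < a - 1)
    (w : Fin b) (hwi : w ≠ i) (hwj : w ≠ j) :
    (gG a b).dist i w = (gG a b).dist j w := by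
  have small : ∀ z : Fin b, (z:ℕ) < a → ((Equiv.swap i j z : Fin b) : ℕ) < a := by
    intro z hz
    rw [Equiv.swap_apply_def]
    split_ifs <;> omega
  have fixed : ∀ z : Fin b, a - 1 ≤ (z:ℕ) → Equiv.swap i j z = z := by
    intro z hz
    apply Equiv.swap_apply_of_ne_of_ne
    · exact fun e => by rw [e] at hz; omega
    · exact fun e => by rw [e] at hz; omega
  have hpres : ∀ x y : Fin b, (gG a b).Adj x y →
      (gG a b).Adj (Equiv.swap i j x) (Equiv.swap i j y) := by
    intro x y hadj
    obtain ⟨hne, hc⟩ := gG_adj.mp hadj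
    refine gG_adj.mpr ⟨(Equiv.swap i j).injective.ne hne, ?_⟩
    rcases hc with ⟨h1, h2⟩ | ⟨h1, h2⟩ | ⟨h1, h2⟩
    · exact Or.inl ⟨small x h1, small y h2⟩
    · rw [fixed x (by omega), fixed y (by omega)]
      exact Or.inr (Or.inl ⟨h1, h2⟩)
    · rw [fixed x (by omega), fixed y (by omega)]
      exact Or.inr (Or.inr ⟨h1, h2⟩)
  let e : (gG a b) ≃g (gG a b) :=
    { toEquiv := Equiv.swap i j
      map_rel_iff' := by
        intro x y
        constructor
        · intro h
          have := hpres _ _ h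
          simpa using this
        · exact hpres x y }
  have key := iso_dist e i w
  have e1 : e i = j := Equiv.swap_apply_left i j
  have e2 : e w = w := Equiv.swap_apply_of_ne_of_ne hwi hwj
  rw [e1, e2] at key
  exact key.symm

section Main
variable {a b : ℕ}

/-- The candidate WTR set: the twins together with the last vertex. -/
def gW (a b : ℕ) (hb : 0 < b) : Finset (Fin b) :=
  (Finset.univ.filter fun i : Fin b => (i:ℕ) < a - 1) ∪ {⟨b-1, by omega⟩}

lemma gW_mem {hb : 0 < b} {i : Fin b} :
    i ∈ gW a b hb ↔ (i:ℕ) < a - 1 ∨ i = ⟨b-1, by omega⟩ := by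
  simp [gW]
  exact Or.comm

lemma gW_card (ha : 2 ≤ a) (hab : a ≤ b) (hb : 0 < b) : (gW a b hb).card = a := by
  have hd : Disjoint (Finset.univ.filter fun i : Fin b => (i:ℕ) < a - 1)
      ({⟨b-1, by omega⟩} : Finset (Fin b)) := by
    simp only [Finset.disjoint_singleton_right, Finset.mem_filter]
    rintro ⟨-, h⟩
    omega
  have hfilter : (Finset.univ.filter fun i : Fin b => (i:ℕ) < a - 1)
      = Finset.Iio (⟨a-1, by omega⟩ : Fin b) := by
    ext i
    simp [Fin.lt_def]
  rw [gW, Finset.card_union_of_disjoint hd, hfilter, Fin.card_Iio]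
  simp
  omega

lemma gW_wtr (ha : 2 ≤ a) (hab : a ≤ b) (hb : 0 < b) : IsWTRSet (gG a b) (gW a b hb) := by
  have hconn := gG_connected a b ha hab
  constructor
  · -- resolving
    intro u v huv
    by_cases hu : u ∈ gW a b hb
    · refine ⟨u, hu, ?_⟩
      rw [SimpleGraph.dist_self]
      exact (hconn.pos_dist_of_ne (Ne.symm huv)).ne
    · by_cases hv : v ∈ gW a b hb
      · refine ⟨v, hv, ?_⟩
        rw [SimpleGraph.dist_self]
        exact (hconn.pos_dist_of_ne huv).ne'
      · -- both are path vertices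
        rw [gW_mem] at hu hv
        push_neg at hu hv
        obtain ⟨hu1, hu2⟩ := hu
        obtain ⟨hv1, hv2⟩ := hv
        have hu2' : (u:ℕ) ≠ b - 1 := fun e => hu2 (Fin.ext e)
        have hv2' : (v:ℕ) ≠ b - 1 := fun e => hv2 (Fin.ext e)
        refine ⟨⟨b-1, by omega⟩, gW_mem.mpr (Or.inr rfl), ?_⟩
        rw [dist_last_of_path ha hab u (by omega), dist_last_of_path ha hab v (by omega)]
        have := val_ne_of_ne huv
        have := u.2
        have := v.2
        omega
  · -- weak total
    intro v hv u hu
    rw [gW_mem] at hu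
    push_neg at hu
    obtain ⟨hu1, hu2⟩ := hu
    have hu2' : (u:ℕ) ≠ b - 1 := fun e => hu2 (Fin.ext e)
    have hub := u.2
    have hba : a < b := by omega
    rw [gW_mem] at hv
    rcases hv with hv | rfl
    · -- v is a twin; use the last vertex
      refine ⟨⟨b-1, by omega⟩, gW_mem.mpr (Or.inr rfl), ?_, ?_⟩
      · intro e
        have : (b:ℕ) - 1 = (v:ℕ) := by rw [← e]
        omega
      · rw [dist_last_of_path ha hab u (by omega), dist_last_of_twin ha hab hba v hv]
        omega
    · -- v is the last vertex; use the zero vertex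
      refine ⟨⟨0, by omega⟩, gW_mem.mpr (Or.inl (by simp only [Fin.val_mk]; omega)), ?_, ?_⟩
      · intro e
        have : (0:ℕ) = (b:ℕ) - 1 := by
          have := congrArg Fin.val e
          simpa using this
        omega
      · rw [gG_dist_zero ha hab u, gG_dist_zero ha hab ⟨b-1, by omega⟩]
        simp only
        rw [if_neg (by omega : ¬ (u:ℕ) = 0)]
        rw [if_neg (by simp only [Fin.val_mk]; omega : ¬ ((⟨b-1, by omega⟩ : Fin b) : ℕ) = 0)]
        rw [if_neg (by simp only [Fin.val_mk]; omega : ¬ ((⟨b-1, by omega⟩ : Fin b) : ℕ) < a)]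
        split_ifs <;> omega

lemma wtr_card_ge (ha : 2 ≤ a) (hab : a ≤ b) (W : Finset (Fin b))
    (h : IsWTRSet (gG a b) W) : a ≤ W.card := by
  have hb : 0 < b := by omega
  have hb2 : 2 ≤ b := by omega
  have hconn := gG_connected a b ha hab
  set zero : Fin b := ⟨0, by omega⟩ with hzero
  set one : Fin b := ⟨1, by omega⟩ with hone
  have hz1 : zero ≠ one := by simp [hzero, hone, Fin.ext_iff]
  -- step 1 : 2 ≤ W.card
  have h2 : 2 ≤ W.card := by
    by_contra hlt
    push_neg at hlt
    interval_cases hW : W.card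
    · obtain ⟨w, hw, -⟩ := h.1 zero one hz1
      rw [Finset.card_eq_zero.mp hW] at hw
      exact absurd hw (Finset.notMem_empty w)
    · obtain ⟨v, hv⟩ := Finset.card_eq_one.mp hW
      have hvW : v ∈ W := by rw [hv]; exact Finset.mem_singleton_self v
      have : Nontrivial (Fin b) := ⟨zero, one, hz1⟩
      obtain ⟨u, hune⟩ := exists_ne v
      have huW : u ∉ W := by rw [hv]; simpa using hune
      obtain ⟨w, hw, hwv, -⟩ := h.2 v hvW u huW
      rw [hv] at hw
      exact hwv (Finset.mem_singleton.mp hw)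
  rcases Nat.lt_or_ge a 3 with ha2 | ha3
  · omega
  · -- a ≥ 3 : all twins are in W
    have twinsub : ∀ i : Fin b, (i:ℕ) < a - 1 → i ∈ W := by
      intro i hi
      by_contra hiW
      set j : Fin b := if (i:ℕ) = 0 then one else zero with hj
      have hjval : (j:ℕ) < a - 1 ∧ (j:ℕ) ≠ (i:ℕ) := by
        rw [hj]
        split_ifs with h0 <;> simp [hone, hzero] <;> omega
      have hij : i ≠ j := fun e => hjval.2 (by rw [e])
      have heq : ∀ w : Fin b, w ≠ i → w ≠ j → (gG a b).dist i w = (gG a b).dist j w :=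
        fun w hwi hwj => twin_dist_eq hi hjval.1 w hwi hwj
      by_cases hjW : j ∈ W
      · obtain ⟨w, hw, hwj, hne⟩ := h.2 j hjW i hiW
        have hwi : w ≠ i := fun e => hiW (e ▸ hw)
        exact hne (heq w hwi hwj)
      · obtain ⟨w, hw, hne⟩ := h.1 i j hij
        have hwi : w ≠ i := fun e => hiW (e ▸ hw)
        have hwj : w ≠ j := fun e => hjW (e ▸ hw)
        exact hne (heq w hwi hwj)
    -- the twins form a set of size a - 1 inside W
    have hTsub : Finset.Iio (⟨a-1, by omega⟩ : Fin b) ⊆ W := by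
      intro i hi
      exact twinsub i (by simpa [Fin.lt_def] using hi)
    have hTcard : (Finset.Iio (⟨a-1, by omega⟩ : Fin b)).card = a - 1 := by
      rw [Fin.card_Iio]
    by_contra hcon
    push_neg at hcon
    have hWeq : W = Finset.Iio (⟨a-1, by omega⟩ : Fin b) :=
      (Finset.eq_of_subset_of_card_le hTsub (by rw [hTcard]; omega)).symm
    -- junction vertex is not in W; zero is in W; contradiction
    have hjunc : (⟨a-1, by omega⟩ : Fin b) ∉ W := by
      rw [hWeq]; simp
    have hzW : zero ∈ W := by
      rw [hWeq]; simp [Fin.lt_def, hzero]; omega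
    obtain ⟨w, hw, hwz, hne⟩ := h.2 zero hzW (⟨a-1, by omega⟩ : Fin b) hjunc
    have hwT : (w:ℕ) < a - 1 := by
      rw [hWeq] at hw; simpa [Fin.lt_def] using hw
    have d1 : (gG a b).dist (⟨a-1, by omega⟩ : Fin b) w = 1 := by
      apply SimpleGraph.dist_eq_one_iff_adj.mpr
      exact gG_adj' (by simp only [Fin.val_mk]; omega) (by simp only [Fin.val_mk]; omega)
    have d2 : (gG a b).dist zero w = 1 := by
      apply SimpleGraph.dist_eq_one_iff_adj.mpr
      refine gG_adj' ?_ (by simp only [hzero, Fin.val_mk]; omega)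
      have := val_ne_of_ne hwz
      simp only [hzero, Fin.val_mk] at this ⊢
      omega
    rw [d1, d2] at hne
    exact hne rfl

end Main


/-- for all `2 ≤ a ≤ b` there is a connected graph of order `b` with
`dim_wt(G) = a`. -/
theorem exists_graph_order_wtDim (a b : ℕ) (ha : 2 ≤ a) (hab : a ≤ b) :
    ∃ (V : Type) (_ : Fintype V) (G : SimpleGraph V),
      G.Connected ∧ Fintype.card V = b ∧ wtDim G = a := by
  have hb : 0 < b := by omega
  refine ⟨Fin b, inferInstance, gG a b, gG_connected a b ha hab, by simp, ?_⟩
  unfold wtDim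
  have hmem : a ∈ {k | ∃ W : Finset (Fin b), W.card = k ∧ IsWTRSet (gG a b) W} :=
    ⟨gW a b hb, gW_card ha hab hb, gW_wtr ha hab hb⟩
  apply le_antisymm
  · exact Nat.sInf_le hmem
  · apply le_csInf ⟨a, hmem⟩
    rintro k ⟨W', hW'card, hW'⟩
    rw [← hW'card]
    exact wtr_card_ge ha hab W' hW'
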